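/- Let α > 0, X a complex Banach space and T a bounded linear operator on X. Then the following are equivalent: (i) T is (C,α)-bounded, i.e. sup_{n∈ℕ₀} ‖Δ^{-α}𝒯(n)‖ / k^{α+1}(n) < ∞; (ii) there exist M > 0 and a linear map θ from the finitely supported complex sequences into the bounded operators on X such that θ(f*g) = θ(f)∘θ(g) for all finitely supported f, g, θ(e_1) = T, and ‖θ(f)‖ ≤ M·q_α(f) for all finitely supported f. -/

import Mathlib

/-- The Cesàro kernel `k^α(n) = Γ(n+α)/(Γ(α)·Γ(n+1))`. -/
noncomputable def cesK (α : ℝ) (n : ℕ) : ℝ :=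
  Real.Gamma ((n : ℝ) + α) / (Real.Gamma α * Real.Gamma ((n : ℝ) + 1))

/-- The Weyl sum of order `α`: `W^{-α}f(n) = ∑_{j=n}^∞ k^α(j-n)·f(j)`. -/
noncomputable def weylSum (α : ℝ) (f : ℕ → ℂ) : ℕ → ℂ :=
  fun n => ∑ᶠ j : ℕ, (cesK α j : ℂ) * f (j + n)

/-- The forward difference operator `Δh(n) = h(n+1) - h(n)`. -/
def fdiff (f : ℕ → ℂ) : ℕ → ℂ := fun n => f (n + 1) - f n

/-- The Weyl difference of order `α > 0`:
`W^α f(n) = (-1)^m Δ^m W^{-(m-α)} f(n)` with `m = [α]+1`; and `W^0 f = f`. -/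
noncomputable def weylDiff (α : ℝ) (f : ℕ → ℂ) : ℕ → ℂ :=
  if α = 0 then f
  else fun n => (-1 : ℂ) ^ (⌊α⌋₊ + 1) * fdiff^[⌊α⌋₊ + 1] (weylSum ((⌊α⌋₊ : ℝ) + 1 - α) f) n

/-- Convolution of sequences: `(f*g)(n) = ∑_{j=0}^n f(n-j)·g(j)`. -/
noncomputable def conv (f g : ℕ → ℂ) (n : ℕ) : ℂ :=
  ∑ j ∈ Finset.range (n + 1), f (n - j) * g j

/-- `q_α(f) = ∑_{n=0}^∞ k^{α+1}(n)·|W^α f(n)|`. -/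
noncomputable def qA (α : ℝ) (f : ℕ → ℂ) : ℝ :=
  ∑ᶠ n : ℕ, cesK (α + 1) n * ‖weylDiff α f n‖

/-- The Cesàro sum of order `α` of a bounded operator `T`:
`Δ^{-α}𝒯(n) = ∑_{j=0}^n k^α(n-j)·T^j`. -/
noncomputable def cesOp {X : Type*} [NormedAddCommGroup X] [NormedSpace ℂ X]
    (α : ℝ) (T : X →L[ℂ] X) (n : ℕ) : X →L[ℂ] X :=
  ∑ j ∈ Finset.range (n + 1), (cesK α (n - j) : ℂ) • T ^ j

/-- The canonical sequence `e_n(j) = δ_{n,j}`. -/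
def eseq (n : ℕ) : ℕ → ℂ := fun j => if j = n then 1 else 0

lemma cesK_pos {β : ℝ} (hβ : 0 < β) (n : ℕ) : 0 < cesK β n := by
  unfold cesK
  have h1 : 0 < Real.Gamma ((n:ℝ) + β) := Real.Gamma_pos_of_pos (by positivity)
  have h2 : 0 < Real.Gamma β := Real.Gamma_pos_of_pos hβ
  have h3 : 0 < Real.Gamma ((n:ℝ) + 1) := Real.Gamma_pos_of_pos (by positivity)
  positivity

lemma cesK_zero {β : ℝ} (hβ : 0 < β) : cesK β 0 = 1 := by
  unfold cesK
  simp [Real.Gamma_one]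
  exact (ne_of_gt (Real.Gamma_pos_of_pos hβ))

lemma cesK_one (n : ℕ) : cesK 1 n = 1 := by
  unfold cesK
  rw [Real.Gamma_one]
  rw [one_mul, div_self (ne_of_gt (Real.Gamma_pos_of_pos (by positivity)))]

lemma cesK_rec {β : ℝ} (hβ : 0 < β) (n : ℕ) :
    cesK β (n+1) * ((n:ℝ)+1) = cesK β n * ((n:ℝ)+β) := by
  unfold cesK
  have e1 : ((n+1 : ℕ) : ℝ) + β = ((n:ℝ) + β) + 1 := by push_cast; ring
  have e2 : ((n+1 : ℕ) : ℝ) + 1 = ((n:ℝ) + 1) + 1 := by push_cast; ring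
  rw [e1, e2, Real.Gamma_add_one (by positivity), Real.Gamma_add_one (by positivity)]
  have h3 : Real.Gamma ((n:ℝ) + 1) ≠ 0 := ne_of_gt (Real.Gamma_pos_of_pos (by positivity))
  have h2 : Real.Gamma β ≠ 0 := ne_of_gt (Real.Gamma_pos_of_pos hβ)
  field_simp


open Finset in
lemma cesK_vandermonde {β γ : ℝ} (hβ : 0 < β) (hγ : 0 < γ) (m : ℕ) :
    ∑ j ∈ Finset.range (m+1), cesK β (m-j) * cesK γ j = cesK (β+γ) m := by
  induction m with
  | zero => simp [cesK_zero hβ, cesK_zero hγ, cesK_zero (by positivity : (0:ℝ) < β + γ)]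
  | succ m ih =>
    have hA : ∑ j ∈ range (m+2), ((m+1-j : ℕ):ℝ) * (cesK β (m+1-j) * cesK γ j)
        = ∑ j ∈ range (m+1), (((m-j:ℕ):ℝ)+β) * (cesK β (m-j) * cesK γ j) := by
      rw [Finset.sum_range_succ]
      simp only [Nat.sub_self, Nat.cast_zero, zero_mul, add_zero]
      refine Finset.sum_congr rfl (fun j hj => ?_)
      have hjm : j ≤ m := Nat.lt_succ_iff.mp (mem_range.mp hj)
      have h1 : m + 1 - j = (m - j) + 1 := by omega
      have h2 : ((m + 1 - j : ℕ):ℝ) = ((m-j:ℕ):ℝ) + 1 := by rw [h1]; push_cast; ring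
      rw [h1]
      have := cesK_rec hβ (m-j)
      push_cast
      linear_combination cesK γ j * this
    have hB : ∑ j ∈ range (m+2), ((j : ℕ):ℝ) * (cesK β (m+1-j) * cesK γ j)
        = ∑ j ∈ range (m+1), (((j:ℕ):ℝ)+γ) * (cesK β (m-j) * cesK γ j) := by
      rw [Finset.sum_range_succ']
      simp only [Nat.cast_zero, zero_mul, add_zero]
      refine Finset.sum_congr rfl (fun j hj => ?_)
      have h1 : m + 1 - (j+1) = m - j := by omega
      rw [h1]
      have := cesK_rec hγ j
      push_cast
      linear_combination cesK β (m-j) * this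
    have key : (∑ j ∈ range (m+2), cesK β (m+1-j) * cesK γ j) * ((m:ℝ)+1)
        = cesK (β+γ) m * ((m:ℝ) + β + γ) := by
      rw [Finset.sum_mul]
      have : ∀ j ∈ range (m+2), (cesK β (m+1-j) * cesK γ j) * ((m:ℝ)+1)
          = ((m+1-j : ℕ):ℝ) * (cesK β (m+1-j) * cesK γ j)
            + ((j : ℕ):ℝ) * (cesK β (m+1-j) * cesK γ j) := by
        intro j hj
        have hjm : j ≤ m + 1 := Nat.lt_succ_iff.mp (mem_range.mp hj)
        have : ((m+1-j : ℕ):ℝ) = (m:ℝ) + 1 - (j:ℝ) := by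
          rw [Nat.cast_sub hjm]; push_cast; ring
        rw [this]; ring
      rw [Finset.sum_congr rfl this, Finset.sum_add_distrib, hA, hB, ← Finset.sum_add_distrib]
      have : ∀ j ∈ range (m+1), (((m-j:ℕ):ℝ)+β) * (cesK β (m-j) * cesK γ j)
          + (((j:ℕ):ℝ)+γ) * (cesK β (m-j) * cesK γ j)
          = ((m:ℝ) + β + γ) * (cesK β (m-j) * cesK γ j) := by
        intro j hj
        have hjm : j ≤ m := Nat.lt_succ_iff.mp (mem_range.mp hj)
        have : ((m-j:ℕ):ℝ) = (m:ℝ) - (j:ℝ) := by rw [Nat.cast_sub hjm]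
        rw [this]; ring
      rw [Finset.sum_congr rfl this, ← Finset.mul_sum, ih]; ring
    have hrec := cesK_rec (by positivity : (0:ℝ) < β + γ) m
    have hm1 : ((m:ℝ)+1) ≠ 0 := by positivity
    have : (∑ j ∈ range (m+2), cesK β (m+1-j) * cesK γ j) * ((m:ℝ)+1)
        = cesK (β+γ) (m+1) * ((m:ℝ)+1) := by
      rw [key, hrec]; ring_nf
    exact mul_right_cancel₀ hm1 this


/-- `f` vanishes from `N` on. -/
def Van (N : ℕ) (f : ℕ → ℂ) : Prop := ∀ n, N ≤ n → f n = 0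

open Finset

lemma Van.mono {N M : ℕ} {f : ℕ → ℂ} (h : Van N f) (hNM : N ≤ M) : Van M f :=
  fun n hn => h n (le_trans hNM hn)

lemma weylSum_eq_sum (β : ℝ) {N : ℕ} {f : ℕ → ℂ} (hf : Van N f) (n : ℕ) :
    weylSum β f n = ∑ j ∈ range N, (cesK β j : ℂ) * f (j + n) := by
  apply finsum_eq_sum_of_support_subset
  intro j hj
  simp only [Function.mem_support, ne_eq] at hj
  simp only [coe_range, Set.mem_Iio]
  by_contra h
  exact hj (by rw [hf (j + n) (by omega), mul_zero])

lemma Van.weylSum {N : ℕ} {f : ℕ → ℂ} (hf : Van N f) (β : ℝ) : Van N (weylSum β f) := by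
  intro n hn
  rw [weylSum_eq_sum β hf n]
  apply Finset.sum_eq_zero
  intro j _
  rw [hf (j + n) (by omega), mul_zero]

lemma Van.fdiff {N : ℕ} {f : ℕ → ℂ} (hf : Van N f) : Van N (fdiff f) := by
  intro n hn
  simp only [_root_.fdiff, hf n hn, hf (n+1) (by omega), sub_zero]

lemma Van.fdiff_iter {N : ℕ} {f : ℕ → ℂ} (hf : Van N f) (k : ℕ) : Van N (_root_.fdiff^[k] f) := by
  induction k with
  | zero => exact hf
  | succ k ih => rw [Function.iterate_succ_apply']; exact ih.fdiff

lemma fdiff_iter_neg (k : ℕ) (f : ℕ → ℂ) :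
    fdiff^[k] (fun n => - f n) = fun n => - fdiff^[k] f n := by
  induction k generalizing f with
  | zero => simp
  | succ k ih =>
    rw [Function.iterate_succ_apply, Function.iterate_succ_apply]
    have h : fdiff (fun n => - f n) = fun n => - fdiff f n := by
      funext n; simp [_root_.fdiff]; ring
    rw [h, ih (fdiff f)]

/-- triangle reindexing -/
lemma double_sum_triangle (N : ℕ) (F : ℕ → ℕ → ℂ)
    (hF : ∀ i j, N ≤ i + j → F i j = 0) :
    ∑ i ∈ range N, ∑ j ∈ range N, F i j
      = ∑ m ∈ range N, ∑ j ∈ range (m+1), F (m-j) j := by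
  rw [← Finset.sum_product']
  rw [Finset.sum_sigma']
  have hsub : ((range N ×ˢ range N).filter (fun p => p.1 + p.2 < N)) ⊆ range N ×ˢ range N :=
    Finset.filter_subset _ _
  have hzero : ∀ p ∈ range N ×ˢ range N,
      p ∉ (range N ×ˢ range N).filter (fun p => p.1 + p.2 < N) → F p.1 p.2 = 0 := by
    intro p hp hnp
    simp only [Finset.mem_filter, not_and, not_lt] at hnp
    exact hF p.1 p.2 (hnp hp)
  rw [← Finset.sum_subset hsub hzero]
  refine Finset.sum_nbij' (i := fun p => (⟨p.1 + p.2, p.2⟩ : Σ _ : ℕ, ℕ))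
      (j := fun q => (q.1 - q.2, q.2)) ?_ ?_ ?_ ?_ ?_
  · intro p hp
    simp only [Finset.mem_filter, Finset.mem_product, Finset.mem_range] at hp
    simp only [Finset.mem_sigma, Finset.mem_range]
    omega
  · intro q hq
    simp only [Finset.mem_sigma, Finset.mem_range] at hq
    simp only [Finset.mem_filter, Finset.mem_product, Finset.mem_range]
    omega
  · intro p hp; simp
  · intro q hq
    simp only [Finset.mem_sigma, Finset.mem_range] at hq
    ext <;> simp <;> omega
  · intro p hp; simp

lemma weylSum_weylSum {β γ : ℝ} (hβ : 0 < β) (hγ : 0 < γ) {N : ℕ} {f : ℕ → ℂ}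
    (hf : Van N f) :
    weylSum β (weylSum γ f) = weylSum (β + γ) f := by
  funext n
  rw [weylSum_eq_sum β (hf.weylSum γ) n, weylSum_eq_sum (β+γ) hf n]
  have step : ∀ i, weylSum γ f (i + n) = ∑ j ∈ range N, (cesK γ j : ℂ) * f (j + (i + n)) :=
    fun i => weylSum_eq_sum γ hf (i+n)
  calc ∑ i ∈ range N, (cesK β i : ℂ) * weylSum γ f (i + n)
      = ∑ i ∈ range N, ∑ j ∈ range N, (cesK β i : ℂ) * ((cesK γ j : ℂ) * f (j + (i + n))) := by
        refine Finset.sum_congr rfl fun i _ => ?_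
        rw [step i, Finset.mul_sum]
    _ = ∑ m ∈ range N, ∑ j ∈ range (m+1),
          (cesK β (m-j) : ℂ) * ((cesK γ j : ℂ) * f (j + ((m-j) + n))) := by
        apply double_sum_triangle
        intro i j hij
        rw [hf (j + (i + n)) (by omega), mul_zero, mul_zero]
    _ = ∑ m ∈ range N, (cesK (β+γ) m : ℂ) * f (m + n) := by
        refine Finset.sum_congr rfl fun m hm => ?_
        have : ∀ j ∈ range (m+1),
            (cesK β (m-j) : ℂ) * ((cesK γ j : ℂ) * f (j + ((m-j) + n)))
            = ((cesK β (m-j) * cesK γ j : ℝ) : ℂ) * f (m + n) := by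
          intro j hj
          have hjm : j ≤ m := Nat.lt_succ_iff.mp (mem_range.mp hj)
          have : j + ((m - j) + n) = m + n := by omega
          rw [this]; push_cast; ring
        rw [Finset.sum_congr rfl this, ← Finset.sum_mul, ← Complex.ofReal_sum,
          cesK_vandermonde hβ hγ m]

lemma fdiff_weylSum (β : ℝ) {N : ℕ} {f : ℕ → ℂ} (hf : Van N f) :
    fdiff (weylSum β f) = weylSum β (fdiff f) := by
  funext n
  rw [_root_.fdiff]
  rw [weylSum_eq_sum β hf (n+1), weylSum_eq_sum β hf n, weylSum_eq_sum β hf.fdiff n,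
    ← Finset.sum_sub_distrib]
  refine Finset.sum_congr rfl fun j _ => ?_
  have : j + (n + 1) = (j + n) + 1 := by omega
  rw [this, _root_.fdiff]
  ring

lemma fdiff_iter_weylSum (β : ℝ) {N : ℕ} {f : ℕ → ℂ} (hf : Van N f) (k : ℕ) :
    fdiff^[k] (weylSum β f) = weylSum β (fdiff^[k] f) := by
  induction k with
  | zero => rfl
  | succ k ih =>
    rw [Function.iterate_succ_apply', ih, fdiff_weylSum β (hf.fdiff_iter k),
      Function.iterate_succ_apply']

lemma fdiff_weylSum_one {N : ℕ} {f : ℕ → ℂ} (hf : Van N f) :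
    fdiff (weylSum 1 f) = fun n => - f n := by
  funext n
  have hf' : Van (N+1) f := hf.mono (by omega)
  rw [_root_.fdiff, weylSum_eq_sum 1 hf' (n+1), weylSum_eq_sum 1 hf' n]
  simp only [cesK_one, Complex.ofReal_one, one_mul]
  have h1 : ∑ j ∈ range (N+1), f (j + (n+1)) = ∑ j ∈ range (N+1), f ((j+1) + n) := by
    refine Finset.sum_congr rfl fun j _ => ?_; congr 1; omega
  rw [h1, Finset.sum_range_succ, Finset.sum_range_succ' (fun j => f (j + n)) N]
  rw [hf (N + 1 + n) (by omega)]
  simp only [zero_add, add_zero]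
  ring

/-- `(-1)^m Δ^m S_m f = f` for `m ≥ 1`. -/
lemma fdiff_iter_weylSum_nat {N : ℕ} {f : ℕ → ℂ} (hf : Van N f) (m : ℕ) (hm : 1 ≤ m) :
    fdiff^[m] (weylSum (m : ℝ) f) = fun n => (-1 : ℂ)^m * f n := by
  induction m with
  | zero => omega
  | succ m ih =>
    rcases Nat.eq_or_lt_of_le hm with h1 | h1
    · rw [← h1]
      simp only [Function.iterate_one, Nat.cast_one]
      rw [fdiff_weylSum_one hf]
      funext n; ring
    · have hm' : 1 ≤ m := by omega
      have hc : ((m+1 : ℕ) : ℝ) = 1 + (m : ℝ) := by push_cast; ring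
      have hsplit : weylSum ((m+1 : ℕ) : ℝ) f = weylSum 1 (weylSum (m : ℝ) f) := by
        rw [weylSum_weylSum one_pos (by exact_mod_cast hm' : (0:ℝ) < (m:ℝ)) hf, hc]
      rw [hsplit, Function.iterate_succ_apply, fdiff_weylSum_one (hf.weylSum (m:ℝ)),
        fdiff_iter_neg, ih hm']
      funext n
      simp only [pow_succ]
      ring


open Finset Polynomial

lemma weylDiff_eq {α : ℝ} (hα : 0 < α) (f : ℕ → ℂ) :
    weylDiff α f
      = fun n => (-1 : ℂ) ^ (⌊α⌋₊ + 1)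
          * fdiff^[⌊α⌋₊ + 1] (weylSum ((⌊α⌋₊ : ℝ) + 1 - α) f) n := by
  rw [weylDiff, if_neg hα.ne']

lemma floor_beta_pos {α : ℝ} (hα : 0 < α) : 0 < (⌊α⌋₊ : ℝ) + 1 - α := by
  have := Nat.lt_floor_add_one α
  linarith

lemma Van.weylDiff {α : ℝ} (hα : 0 < α) {N : ℕ} {f : ℕ → ℂ} (hf : Van N f) :
    Van N (weylDiff α f) := by
  rw [weylDiff_eq hα]
  intro n hn
  simp only [Van.fdiff_iter (hf.weylSum _) (⌊α⌋₊ + 1) n hn, mul_zero]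

lemma weylSum_mul (β : ℝ) (c : ℂ) {N : ℕ} {f : ℕ → ℂ} (hf : Van N f) :
    weylSum β (fun n => c * f n) = fun n => c * weylSum β f n := by
  funext n
  have hcf : Van N (fun n => c * f n) := fun n hn => by simp only [hf n hn, mul_zero]
  rw [weylSum_eq_sum β hcf n, weylSum_eq_sum β hf n, Finset.mul_sum]
  exact Finset.sum_congr rfl fun j _ => by ring

lemma weylSum_weylDiff {α : ℝ} (hα : 0 < α) {N : ℕ} {f : ℕ → ℂ} (hf : Van N f) :
    weylSum α (weylDiff α f) = f := by
  set m := ⌊α⌋₊ + 1 with hm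
  set β := (⌊α⌋₊ : ℝ) + 1 - α with hβ
  have hβpos : 0 < β := floor_beta_pos hα
  have hD : Van N (_root_.fdiff^[m] (weylSum β f)) := (hf.weylSum β).fdiff_iter m
  have h1 : weylSum α (weylSum β (_root_.fdiff^[m] f)) = weylSum (α + β) (_root_.fdiff^[m] f) :=
    weylSum_weylSum hα hβpos (hf.fdiff_iter m)
  have h2 : α + β = (m : ℝ) := by rw [hβ, hm]; push_cast; ring
  rw [weylDiff_eq hα, weylSum_mul α _ hD, fdiff_iter_weylSum β hf m, h1, h2,
    ← fdiff_iter_weylSum (m:ℝ) hf m, fdiff_iter_weylSum_nat hf m (by omega)]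
  funext n
  simp only
  rw [← mul_assoc, ← mul_pow]
  norm_num
lemma weylDiff_weylSum {α : ℝ} (hα : 0 < α) {N : ℕ} {f : ℕ → ℂ} (hf : Van N f) :
    weylDiff α (weylSum α f) = f := by
  set m := ⌊α⌋₊ + 1 with hm
  set β := (⌊α⌋₊ : ℝ) + 1 - α with hβ
  have hβpos : 0 < β := floor_beta_pos hα
  have h2 : β + α = (m : ℝ) := by rw [hβ, hm]; push_cast; ring
  rw [weylDiff_eq hα, ← hm, ← hβ]
  funext n
  rw [weylSum_weylSum hβpos hα hf, h2, fdiff_iter_weylSum_nat hf m (by omega)]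
  simp only
  rw [← mul_assoc, ← mul_pow]
  norm_num


lemma van_of_finite {f : ℕ → ℂ} (hf : (Function.support f).Finite) : ∃ N, Van N f := by
  obtain ⟨N, hN⟩ := Finset.exists_nat_subset_range hf.toFinset
  refine ⟨N, fun n hn => ?_⟩
  by_contra h
  have : n ∈ hf.toFinset := by simpa [Set.Finite.mem_toFinset, Function.mem_support] using h
  have := hN this
  simp only [Finset.mem_range] at this
  omega

lemma finite_of_van {f : ℕ → ℂ} {N : ℕ} (hf : Van N f) : (Function.support f).Finite := by
  apply Set.Finite.subset (Set.finite_Iio N)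
  intro n hn
  simp only [Function.mem_support] at hn
  simp only [Set.mem_Iio]
  by_contra h
  exact hn (hf n (by omega))

/-- sequence to polynomial -/
noncomputable def pol (f : ℕ → ℂ) : Polynomial ℂ := ∑ᶠ n, Polynomial.monomial n (f n)

lemma pol_eq_sum {f : ℕ → ℂ} {N : ℕ} (hf : Van N f) :
    pol f = ∑ n ∈ range N, Polynomial.monomial n (f n) := by
  apply finsum_eq_sum_of_support_subset
  intro n hn
  simp only [Function.mem_support, ne_eq] at hn
  simp only [coe_range, Set.mem_Iio]
  by_contra h
  exact hn (by rw [hf n (by omega), map_zero])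

lemma pol_coeff {f : ℕ → ℂ} {N : ℕ} (hf : Van N f) (n : ℕ) : (pol f).coeff n = f n := by
  rw [pol_eq_sum hf, finset_sum_coeff]
  simp only [coeff_monomial]
  rw [Finset.sum_ite_eq' (range N) n f]
  by_cases h : n ∈ range N
  · rw [if_pos h]
  · rw [if_neg h, hf n (by simpa using h)]

lemma pol_add {f g : ℕ → ℂ} {N : ℕ} (hf : Van N f) (hg : Van N g) :
    pol (f + g) = pol f + pol g := by
  have hfg : Van N (f + g) := fun n hn => by
    simp only [Pi.add_apply, hf n hn, hg n hn, add_zero]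
  rw [pol_eq_sum hf, pol_eq_sum hg, pol_eq_sum hfg, ← Finset.sum_add_distrib]
  exact Finset.sum_congr rfl fun n _ => by simp [map_add]

lemma pol_smul (a : ℂ) {f : ℕ → ℂ} {N : ℕ} (hf : Van N f) :
    pol (a • f) = a • pol f := by
  have haf : Van N (a • f) := fun n hn => by
    simp only [Pi.smul_apply, hf n hn, smul_zero]
  rw [pol_eq_sum hf, pol_eq_sum haf, Finset.smul_sum]
  exact Finset.sum_congr rfl fun n _ => by simp [Polynomial.smul_monomial]

lemma van_conv {f g : ℕ → ℂ} {N M : ℕ} (hf : Van N f) (hg : Van M g) :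
    Van (N + M) (fun n => conv f g n) := by
  intro n hn
  apply Finset.sum_eq_zero
  intro j hj
  simp only [Finset.mem_range] at hj
  by_cases h : j < M
  · rw [hf (n - j) (by omega), zero_mul]
  · rw [hg j (by omega), mul_zero]

lemma pol_conv {f g : ℕ → ℂ} {N M : ℕ} (hf : Van N f) (hg : Van M g) :
    pol (fun n => conv f g n) = pol f * pol g := by
  ext n
  rw [pol_coeff (van_conv hf hg) n, Polynomial.coeff_mul]
  rw [Finset.Nat.sum_antidiagonal_eq_sum_range_succ
    (fun a b => (pol f).coeff a * (pol g).coeff b) n]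
  rw [conv, ← Finset.sum_range_reflect]
  refine Finset.sum_congr rfl fun j hj => ?_
  simp only [Finset.mem_range] at hj
  have h1 : n + 1 - 1 - j = n - j := by omega
  have h2 : n - (n - j) = j := by omega
  rw [h1, h2, pol_coeff hf, pol_coeff hg]

lemma van_eseq (n : ℕ) : Van (n+1) (eseq n) := by
  intro m hm
  simp only [eseq, if_neg (by omega : ¬ m = n)]

lemma pol_eseq (n : ℕ) : pol (eseq n) = Polynomial.monomial n 1 := by
  ext m
  rw [pol_coeff (van_eseq n) m, coeff_monomial, eseq]
  by_cases h : m = n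
  · simp [h]
  · rw [if_neg h, if_neg (fun hh => h hh.symm)]


lemma cesK_le_succ {α : ℝ} (hα : 0 < α) (n : ℕ) : cesK α n ≤ cesK (α + 1) n := by
  have h := cesK_vandermonde one_pos hα n
  rw [add_comm 1 α] at h
  rw [← h]
  have : ∀ j ∈ range (n+1), cesK 1 (n-j) * cesK α j = cesK α j := fun j _ => by
    rw [cesK_one, one_mul]
  rw [Finset.sum_congr rfl this]
  exact Finset.single_le_sum (fun j _ => (cesK_pos hα j).le) (self_mem_range_succ n)

lemma qA_eq_sum {α : ℝ} (hα : 0 < α) {N : ℕ} {f : ℕ → ℂ} (hf : Van N f) :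
    qA α f = ∑ n ∈ range N, cesK (α + 1) n * ‖weylDiff α f n‖ := by
  apply finsum_eq_sum_of_support_subset
  intro n hn
  simp only [Function.mem_support, ne_eq] at hn
  simp only [coe_range, Set.mem_Iio]
  by_contra h
  exact hn (by rw [(hf.weylDiff hα) n (by omega)]; simp)

noncomputable def cesPol (α : ℝ) (m : ℕ) : Polynomial ℂ :=
  ∑ j ∈ range (m+1), Polynomial.monomial j ((cesK α (m-j) : ℂ))

lemma cesPol_coeff (α : ℝ) (m n : ℕ) :
    (cesPol α m).coeff n = if n ∈ range (m+1) then (cesK α (m-n) : ℂ) else 0 := by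
  rw [cesPol, finset_sum_coeff]
  simp only [coeff_monomial]
  exact Finset.sum_ite_eq' (range (m+1)) n _

lemma pol_decomp {α : ℝ} (hα : 0 < α) {N : ℕ} {f : ℕ → ℂ} (hf : Van N f) :
    pol f = ∑ m ∈ range N, (weylDiff α f m) • cesPol α m := by
  ext n
  rw [pol_coeff hf n, finset_sum_coeff]
  simp only [Polynomial.coeff_smul, cesPol_coeff, smul_eq_mul, mul_ite, mul_zero]
  by_cases hn : n < N
  · have hWf : Van N (weylDiff α f) := hf.weylDiff hα
    have hfil : (range N).filter (fun m => n ∈ range (m+1)) = Finset.Ico n N := by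
      ext m
      simp only [Finset.mem_filter, Finset.mem_range, Finset.mem_Ico]
      omega
    rw [← Finset.sum_filter, hfil, Finset.sum_Ico_eq_sum_range]
    have hstep : ∀ j ∈ range (N - n),
        weylDiff α f (n + j) * (cesK α (n + j - n) : ℂ)
          = (cesK α j : ℂ) * weylDiff α f (j + n) := by
      intro j _
      have : n + j - n = j := by omega
      rw [this]
      have : n + j = j + n := by omega
      rw [this]; ring
    rw [Finset.sum_congr rfl hstep]
    have hext : ∑ j ∈ range (N - n), (cesK α j : ℂ) * weylDiff α f (j + n)
        = ∑ j ∈ range N, (cesK α j : ℂ) * weylDiff α f (j + n) := by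
      apply Finset.sum_subset (by
        intro j hj; simp only [Finset.mem_range] at *; omega)
      intro j _ hj
      simp only [Finset.mem_range, not_lt] at hj
      rw [hWf (j + n) (by omega), mul_zero]
    rw [hext, ← weylSum_eq_sum α hWf n, weylSum_weylDiff hα hf]
  · rw [hf n (by omega)]
    symm
    apply Finset.sum_eq_zero
    intro m hm
    simp only [Finset.mem_range] at hm
    rw [if_neg (by simp only [Finset.mem_range]; omega)]

section Op
variable {X : Type*} [NormedAddCommGroup X] [NormedSpace ℂ X] [CompleteSpace X]

lemma aeval_cesPol (α : ℝ) (T : X →L[ℂ] X) (m : ℕ) :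
    Polynomial.aeval T (cesPol α m) = cesOp α T m := by
  rw [cesPol, map_sum, cesOp]
  refine Finset.sum_congr rfl fun j _ => ?_
  rw [Polynomial.aeval_monomial, Algebra.smul_def]

lemma theta_decomp {α : ℝ} (hα : 0 < α) (T : X →L[ℂ] X) {N : ℕ} {f : ℕ → ℂ}
    (hf : Van N f) :
    Polynomial.aeval T (pol f) = ∑ m ∈ range N, (weylDiff α f m) • cesOp α T m := by
  rw [pol_decomp hα hf, map_sum]
  refine Finset.sum_congr rfl fun m _ => ?_
  rw [map_smul, aeval_cesPol]

end Op

lemma conv_eseq (a b : ℕ) : (fun n => conv (eseq a) (eseq b) n) = eseq (a+b) := by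
  funext m
  rw [conv]
  by_cases hb : b ≤ m
  · rw [Finset.sum_eq_single_of_mem b (by simp only [Finset.mem_range]; omega)]
    · have h2 : eseq b b = 1 := if_pos rfl
      rw [h2, mul_one]
      by_cases h : m - b = a
      · have e1 : eseq a (m - b) = 1 := if_pos h
        have e2 : eseq (a+b) m = 1 := if_pos (by omega)
        rw [e1, e2]
      · have e1 : eseq a (m - b) = 0 := if_neg h
        have e2 : eseq (a+b) m = 0 := if_neg (by omega)
        rw [e1, e2]
    · intro j _ hj
      have : eseq b j = 0 := if_neg hj
      rw [this, mul_zero]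
  · rw [Finset.sum_eq_zero, eq_comm]
    · exact if_neg (by omega)
    · intro j hj
      simp only [Finset.mem_range] at hj
      have : eseq b j = 0 := if_neg (by omega : ¬ j = b)
      rw [this, mul_zero]

lemma cfun_eq (α : ℝ) (n : ℕ) :
    weylSum α (eseq n) = fun x => ∑ j ∈ Finset.range (n+1), (cesK α (n-j) : ℂ) * eseq j x := by
  funext x
  rw [weylSum_eq_sum α (van_eseq n) x]
  by_cases hx : x ≤ n
  · rw [Finset.sum_eq_single_of_mem (n - x) (by simp only [Finset.mem_range]; omega),
      Finset.sum_eq_single_of_mem x (by simp only [Finset.mem_range]; omega)]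
    · have e1 : eseq n (n - x + x) = 1 := if_pos (by omega)
      have e2 : eseq x x = 1 := if_pos rfl
      rw [e1, e2]
    · intro j _ hj
      have : eseq j x = 0 := if_neg (by omega : ¬ x = j)
      rw [this, mul_zero]
    · intro j hj hj'
      simp only [Finset.mem_range] at hj
      have : eseq n (j + x) = 0 := if_neg (by omega : ¬ j + x = n)
      rw [this, mul_zero]
  · rw [Finset.sum_eq_zero, Finset.sum_eq_zero]
    · intro j hj
      simp only [Finset.mem_range] at hj
      have : eseq j x = 0 := if_neg (by omega : ¬ x = j)
      rw [this, mul_zero]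
    · intro j hj
      have : eseq n (j + x) = 0 := if_neg (by omega : ¬ j + x = n)
      rw [this, mul_zero]

theorem stmt17 {X : Type*} [NormedAddCommGroup X] [NormedSpace ℂ X] [CompleteSpace X]
    (α : ℝ) (hα : 0 < α) (T : X →L[ℂ] X) :
    (∃ M : ℝ, ∀ n : ℕ, ‖cesOp α T n‖ ≤ M * cesK (α + 1) n) ↔
      (∃ M : ℝ, 0 < M ∧ ∃ θ : (ℕ → ℂ) → (X →L[ℂ] X),
        (∀ f g : ℕ → ℂ, (Function.support f).Finite → (Function.support g).Finite →
          θ (f + g) = θ f + θ g) ∧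
        (∀ (a : ℂ) (f : ℕ → ℂ), (Function.support f).Finite → θ (a • f) = a • θ f) ∧
        (∀ f g : ℕ → ℂ, (Function.support f).Finite → (Function.support g).Finite →
          θ (fun n => conv f g n) = θ f * θ g) ∧
        θ (eseq 1) = T ∧
        (∀ f : ℕ → ℂ, (Function.support f).Finite → ‖θ f‖ ≤ M * qA α f)) := by
  have hα1 : 0 < α + 1 := by linarith
  constructor
  · rintro ⟨M, hM⟩
    set M' := max M 1 with hM'
    have hM'pos : 0 < M' := lt_of_lt_of_le one_pos (le_max_right M 1)
    have hM'bd : ∀ n, ‖cesOp α T n‖ ≤ M' * cesK (α + 1) n := fun n =>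
      le_trans (hM n) (mul_le_mul_of_nonneg_right (le_max_left M 1) (cesK_pos hα1 n).le)
    refine ⟨M', hM'pos, fun f => Polynomial.aeval T (pol f), ?_, ?_, ?_, ?_, ?_⟩
    · intro f g hf hg
      obtain ⟨Nf, hNf⟩ := van_of_finite hf
      obtain ⟨Ng, hNg⟩ := van_of_finite hg
      show Polynomial.aeval T (pol (f + g))
        = Polynomial.aeval T (pol f) + Polynomial.aeval T (pol g)
      rw [pol_add (hNf.mono (le_max_left Nf Ng)) (hNg.mono (le_max_right Nf Ng)), map_add]
    · intro a f hf
      obtain ⟨N, hN⟩ := van_of_finite hf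
      show Polynomial.aeval T (pol (a • f)) = a • Polynomial.aeval T (pol f)
      rw [pol_smul a hN, map_smul]
    · intro f g hf hg
      obtain ⟨Nf, hNf⟩ := van_of_finite hf
      obtain ⟨Ng, hNg⟩ := van_of_finite hg
      show Polynomial.aeval T (pol (fun n => conv f g n))
        = Polynomial.aeval T (pol f) * Polynomial.aeval T (pol g)
      rw [pol_conv hNf hNg, map_mul]
    · show Polynomial.aeval T (pol (eseq 1)) = T
      rw [pol_eseq 1]
      simp [Polynomial.aeval_monomial]
    · intro f hf
      obtain ⟨N, hN⟩ := van_of_finite hf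
      show ‖Polynomial.aeval T (pol f)‖ ≤ M' * qA α f
      rw [theta_decomp hα T hN, qA_eq_sum hα hN]
      calc ‖∑ m ∈ Finset.range N, (weylDiff α f m) • cesOp α T m‖
          ≤ ∑ m ∈ Finset.range N, ‖(weylDiff α f m) • cesOp α T m‖ := norm_sum_le _ _
        _ ≤ ∑ m ∈ Finset.range N, M' * (cesK (α+1) m * ‖weylDiff α f m‖) := by
            refine Finset.sum_le_sum fun m _ => ?_
            rw [norm_smul (weylDiff α f m) (cesOp α T m)]
            calc ‖weylDiff α f m‖ * ‖cesOp α T m‖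
                ≤ ‖weylDiff α f m‖ * (M' * cesK (α+1) m) :=
                  mul_le_mul_of_nonneg_left (hM'bd m) (norm_nonneg _)
              _ = M' * (cesK (α+1) m * ‖weylDiff α f m‖) := by ring
        _ = M' * ∑ m ∈ Finset.range N, cesK (α+1) m * ‖weylDiff α f m‖ := by
            rw [Finset.mul_sum]
  · rintro ⟨M, hMpos, θ, hadd, hsmul, hconv, h1, hbound⟩
    -- θ of 0 is 0
    have hθ0 : θ 0 = 0 := by
      have h0fin : (Function.support (0 : ℕ → ℂ)).Finite := by
        simp [Function.support_zero]
      have := hsmul 0 0 h0fin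
      simpa using this
    -- θ (eseq j) = T ^ j for j ≥ 1
    have hθpow : ∀ j : ℕ, 1 ≤ j → θ (eseq j) = T ^ j := by
      intro j hj
      induction j with
      | zero => omega
      | succ j ih =>
        rcases Nat.eq_or_lt_of_le hj with h | h
        · rw [← h, h1, pow_one]
        · have hj1 : 1 ≤ j := by omega
          have : eseq (j+1) = fun n => conv (eseq 1) (eseq j) n := by
            rw [conv_eseq 1 j]
            norm_num [add_comm]
          rw [this, hconv _ _ (finite_of_van (van_eseq 1)) (finite_of_van (van_eseq j)),
            h1, ih hj1, pow_succ']
    -- θ of finite linear combinations of eseq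
    have hθsum : ∀ (s : Finset ℕ) (c : ℕ → ℂ),
        θ (fun x => ∑ j ∈ s, c j * eseq j x) = ∑ j ∈ s, c j • θ (eseq j) := by
      intro s
      induction s using Finset.induction_on with
      | empty => intro c; simpa [← Pi.zero_def] using hθ0
      | @insert a s ha ih =>
        intro c
        have hfun : (fun x => ∑ j ∈ insert a s, c j * eseq j x)
            = (c a • eseq a) + (fun x => ∑ j ∈ s, c j * eseq j x) := by
          funext x
          simp [Finset.sum_insert ha]
        have hfin1 : (Function.support (c a • eseq a)).Finite := by
          apply Set.Finite.subset (finite_of_van (van_eseq a))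
          exact Function.support_smul_subset_right _ _
        have hfin2 : (Function.support (fun x => ∑ j ∈ s, c j * eseq j x)).Finite := by
          apply Set.Finite.subset s.finite_toSet
          intro x hx
          simp only [Function.mem_support] at hx
          by_contra hxs
          apply hx
          apply Finset.sum_eq_zero
          intro j hj
          rw [eseq, if_neg (by rintro rfl; exact hxs hj), mul_zero]
        rw [hfun, hadd _ _ hfin1 hfin2, hsmul, ih, Finset.sum_insert ha]
        exact finite_of_van (van_eseq a)
    -- split cesOp
    set C := ‖(1 : X →L[ℂ] X) - θ (eseq 0)‖ with hC
    refine ⟨M + C, fun n => ?_⟩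
    have hcfun : θ (weylSum α (eseq n))
        = ∑ j ∈ Finset.range (n+1), (cesK α (n-j) : ℂ) • θ (eseq j) := by
      rw [cfun_eq α n, hθsum (Finset.range (n+1)) (fun j => (cesK α (n-j) : ℂ))]
    have hsplit : cesOp α T n - θ (weylSum α (eseq n))
        = (cesK α n : ℂ) • ((1 : X →L[ℂ] X) - θ (eseq 0)) := by
      rw [cesOp, hcfun, ← Finset.sum_sub_distrib]
      have : ∀ j ∈ Finset.range (n+1),
          (cesK α (n-j) : ℂ) • T ^ j - (cesK α (n-j) : ℂ) • θ (eseq j)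
            = (cesK α (n-j) : ℂ) • (T ^ j - θ (eseq j)) := fun j _ => (smul_sub _ _ _).symm
      rw [Finset.sum_congr rfl this]
      rw [Finset.sum_eq_single_of_mem 0 (by simp)]
      · simp [pow_zero]
      · intro j _ hj
        rw [hθpow j (by omega), sub_self, smul_zero]
    -- qA of cfun
    have hqA : qA α (weylSum α (eseq n)) = cesK (α+1) n := by
      rw [qA, weylDiff_weylSum hα (van_eseq n)]
      rw [finsum_eq_single _ n (fun m hm => by
        simp [eseq, if_neg hm])]
      simp [eseq]
    -- assemble
    have hb := hbound (weylSum α (eseq n)) (finite_of_van ((van_eseq n).weylSum α))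
    rw [hqA] at hb
    have hCnonneg : 0 ≤ C := norm_nonneg _
    have hkle : cesK α n ≤ cesK (α+1) n := cesK_le_succ hα n
    have hkpos : 0 < cesK (α+1) n := cesK_pos hα1 n
    have hsplit' : cesOp α T n
        = θ (weylSum α (eseq n)) + (cesK α n : ℂ) • ((1 : X →L[ℂ] X) - θ (eseq 0)) := by
      rw [← hsplit]; abel
    calc ‖cesOp α T n‖
        ≤ ‖θ (weylSum α (eseq n))‖ + ‖(cesK α n : ℂ) • ((1 : X →L[ℂ] X) - θ (eseq 0))‖ := by
          rw [hsplit']; exact norm_add_le _ _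
      _ ≤ M * cesK (α+1) n + cesK α n * C := by
          have hns : ‖(cesK α n : ℂ) • ((1 : X →L[ℂ] X) - θ (eseq 0))‖ = cesK α n * C := by
            rw [norm_smul ((cesK α n : ℂ)) ((1 : X →L[ℂ] X) - θ (eseq 0)),
              Complex.norm_real, Real.norm_eq_abs, abs_of_pos (cesK_pos hα n)]
          rw [hns]
          linarith [hb]
      _ ≤ (M + C) * cesK (α+1) n := by nlinarith [cesK_pos hα n]
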